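/- Let F = F₂ be the free group on two generators. There exist a compact metrizable abelian group K₀, a map β₀ : F × (2^ℕ)^F → Aff(K₀) (where each β₀(f,y) is a Borel affine bijection of K₀) satisfying the cocycle identity β₀(f₂f₁, y) = β₀(f₂, f₁·y) ∘ β₀(f₁, y) for all f₁, f₂ ∈ F and y ∈ (2^ℕ)^F, and a Borel bijection φ₀ : 2^F → K₀ × (2^ℕ)^F which is F-equivariant when F acts on 2^F by the left shift and on K₀ × (2^ℕ)^F by the skew product action f·(k, y) = (β₀(f,y)(k), f·y) (with the shift action on (2^ℕ)^F). Moreover, the induced projection π₀ : 2^F → (2^ℕ)^F (the composition of φ₀ with the projection onto the second coordinate) is continuous. -/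

import Mathlib

/-- The free group on two generators. -/
abbrev F2 := FreeGroup (Fin 2)

/-- The left shift action of `G` on the Bernoulli shift `K^G`. -/
def bshift {G : Type*} [Group G] (K : Type*) (g : G) (x : G → K) : G → K :=
  fun h => x (g⁻¹ * h)

/-! ### `Bool` as a (discrete, compact) additive group via `xor` -/

instance : AddCommGroup Bool where
  add := xor
  zero := false
  neg := id
  add_assoc := by decide
  zero_add := by decide
  add_zero := by decide
  neg_add_cancel := by decide
  add_comm := by decide
  nsmul := nsmulRec
  zsmul := zsmulRec

instance : IsTopologicalAddGroup Bool where
  continuous_add := continuous_of_discreteTopology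
  continuous_neg := continuous_of_discreteTopology

lemma bool_add_self (a : Bool) : a + a = 0 := by revert a; decide

lemma bool_add_add (a b : Bool) : a + (a + b) = b := by revert a b; decide

lemma bool_add_false (a : Bool) : a + false = a := by revert a; decide

lemma bool_false_add (a : Bool) : false + a = a := by revert a; decide

instance : Countable F2 :=
  Function.Surjective.countable (f := (FreeGroup.mk : List (Fin 2 × Bool) → F2))
    (fun x => ⟨x.toWord, FreeGroup.mk_toWord⟩)

namespace StmtAux

open FreeGroup List

/-! ### Reduced words -/

variable {α : Type*} [DecidableEq α]

/-- Adjacent letters do not cancel. -/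
def RR : α × Bool → α × Bool → Prop := fun p q => ¬(p.1 = q.1 ∧ p.2 = !q.2)

lemma chain'_reduce (L : List (α × Bool)) : List.Chain' RR (FreeGroup.reduce L) := by
  induction L with
  | nil => exact List.isChain_nil
  | cons x L ih =>
    rw [FreeGroup.reduce.cons]
    rcases h : FreeGroup.reduce L with _ | ⟨hd, tl⟩
    · exact List.isChain_singleton _
    · rw [h] at ih
      dsimp only
      by_cases hc : x.1 = hd.1 ∧ x.2 = !hd.2
      · rw [if_pos hc]
        exact ih.tail
      · rw [if_neg hc]
        exact List.isChain_cons_cons.mpr ⟨hc, ih⟩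

lemma reduce_of_chain' : ∀ {L : List (α × Bool)}, List.Chain' RR L → FreeGroup.reduce L = L := by
  intro L
  induction L with
  | nil => intro _; rfl
  | cons x L ih =>
    intro h
    rw [FreeGroup.reduce.cons, ih h.tail]
    cases L with
    | nil => rfl
    | cons hd tl =>
      have hr : RR x hd := (List.isChain_cons_cons.mp h).1
      dsimp only
      rw [if_neg hr]

lemma toWord_mk_of_chain' {L : List (α × Bool)} (h : List.Chain' RR L) :
    (FreeGroup.mk L).toWord = L := by
  rw [FreeGroup.toWord_mk, reduce_of_chain' h]

lemma chain'_toWord (x : FreeGroup α) : List.Chain' RR x.toWord := by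
  have := chain'_reduce (L := x.toWord)
  rwa [FreeGroup.reduce_toWord] at this

lemma mk_cons (p : α × Bool) (L : List (α × Bool)) :
    FreeGroup.mk (p :: L) = FreeGroup.mk [p] * FreeGroup.mk L := by
  rw [FreeGroup.mul_mk]
  rfl

lemma mk_single_t (i : α) : FreeGroup.mk [(i, true)] = FreeGroup.of i := rfl

lemma mk_single_f (i : α) : FreeGroup.mk [(i, false)] = (FreeGroup.of i)⁻¹ := by
  have : (FreeGroup.mk [(i, true)])⁻¹ = FreeGroup.mk (FreeGroup.invRev [(i, true)]) :=
    FreeGroup.inv_mk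
  rw [mk_single_t] at this
  rw [this]
  simp [FreeGroup.invRev]

lemma mk_replicate_t (i : α) (n : ℕ) :
    FreeGroup.mk (List.replicate n (i, true)) = FreeGroup.of i ^ n := by
  rw [← FreeGroup.toWord_of_pow, FreeGroup.mk_toWord]

lemma mk_replicate_f (i : α) (n : ℕ) :
    FreeGroup.mk (List.replicate n (i, false)) = (FreeGroup.of i ^ n)⁻¹ := by
  have h := FreeGroup.inv_mk (L := List.replicate n (i, true))
  rw [mk_replicate_t] at h
  rw [h]
  congr 1
  simp [FreeGroup.invRev]

/-! ### The free family `cg n = b^n a b^{-n}` -/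

def ga : F2 := FreeGroup.of 0

def gb : F2 := FreeGroup.of 1

def aa (s : Bool) : F2 := if s then ga else ga⁻¹

def cg (n : ℕ) : F2 := gb ^ n * ga * (gb ^ n)⁻¹

noncomputable def iot : FreeGroup ℕ →* F2 := FreeGroup.lift cg

lemma iot_of (n : ℕ) : iot (FreeGroup.of n) = cg n := FreeGroup.lift_apply_of

/-- A block `b^{±k} a^{±1} ⬝ T` as a word. -/
def blk (k : ℕ) (bb s : Bool) (T : List (Fin 2 × Bool)) : List (Fin 2 × Bool) :=
  List.replicate k (1, bb) ++ (0, s) :: T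

lemma RR_one_zero (bb s : Bool) : RR ((1 : Fin 2), bb) ((0 : Fin 2), s) := by
  rintro ⟨h, -⟩
  exact (by decide : ¬ ((1 : Fin 2) = 0)) h

lemma RR_zero_one (s bb : Bool) : RR ((0 : Fin 2), s) ((1 : Fin 2), bb) := by
  rintro ⟨h, -⟩
  exact (by decide : ¬ ((0 : Fin 2) = 1)) h

lemma RR_rep (i : Fin 2) (bb : Bool) : RR (i, bb) (i, bb) := by
  rintro ⟨-, h⟩
  simp at h

lemma chain'_blk {T : List (Fin 2 × Bool)} (k : ℕ) (bb s : Bool)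
    (h : List.Chain' RR ((0, s) :: T)) : List.Chain' RR (blk k bb s T) := by
  unfold blk
  rw [List.Chain', List.isChain_append]
  refine ⟨List.isChain_replicate_of_rel _ (RR_rep _ _), h, ?_⟩
  intro x hx y hy
  have hx' : x = ((1 : Fin 2), bb) := List.eq_of_mem_replicate (List.mem_of_mem_getLast? hx)
  have hy' : y = ((0 : Fin 2), s) := by
    simp only [List.head?_cons, Option.mem_def, Option.some.injEq] at hy
    exact hy.symm
  rw [hx', hy']
  exact RR_one_zero bb s

lemma mk_blk (k : ℕ) (bb s : Bool) (T : List (Fin 2 × Bool)) :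
    FreeGroup.mk (blk k bb s T)
      = (if bb then gb ^ k else (gb ^ k)⁻¹) * (aa s * FreeGroup.mk T) := by
  unfold blk
  rw [← FreeGroup.mul_mk, mk_cons]
  congr 1
  · cases bb
    · simpa [gb] using mk_replicate_f (1 : Fin 2) k
    · simpa [gb] using mk_replicate_t (1 : Fin 2) k
  · congr 1
    cases s
    · simpa [aa, ga] using mk_single_f (0 : Fin 2)
    · simpa [aa, ga] using mk_single_t (0 : Fin 2)

lemma aa_true : aa true = ga := rfl

lemma aa_false : aa false = ga⁻¹ := rfl

lemma iot_single (n : ℕ) (s : Bool) :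
    iot (FreeGroup.mk [(n, s)]) = gb ^ n * aa s * (gb ^ n)⁻¹ := by
  cases s
  · rw [mk_single_f, MonoidHom.map_inv, iot_of, aa_false]
    show (gb ^ n * ga * (gb ^ n)⁻¹)⁻¹ = gb ^ n * ga⁻¹ * (gb ^ n)⁻¹
    group
  · rw [mk_single_t, iot_of, aa_true]
    rfl

lemma key : ∀ (L : List (ℕ × Bool)) (n : ℕ) (s : Bool),
    List.Chain' RR ((n, s) :: L) →
    ∃ T, (iot (FreeGroup.mk ((n, s) :: L))).toWord
      = List.replicate n ((1 : Fin 2), true) ++ ((0 : Fin 2), s) :: T := by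
  intro L
  induction L with
  | nil =>
    intro n s _
    refine ⟨List.replicate n (1, false), ?_⟩
    have hch : List.Chain' RR ((0, s) :: List.replicate n ((1 : Fin 2), false)) := by
      refine List.isChain_cons.mpr ⟨?_, List.isChain_replicate_of_rel _ (RR_rep _ _)⟩
      intro y hy
      have : y = ((1 : Fin 2), false) := List.eq_of_mem_replicate (List.mem_of_mem_head? hy)
      rw [this]
      exact RR_zero_one s false
    have he : iot (FreeGroup.mk [(n, s)])
        = FreeGroup.mk (blk n true s (List.replicate n (1, false))) := by
      rw [mk_blk, iot_single, mk_replicate_f]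
      simp only [if_true, gb]
      group
    rw [he, toWord_mk_of_chain' (chain'_blk n true s hch)]
    rfl
  | cons p L' ih =>
    obtain ⟨m, t⟩ := p
    intro n s hch
    have h1 : RR (n, s) (m, t) := (List.isChain_cons_cons.mp hch).1
    have h2 : List.Chain' RR ((m, t) :: L') := (List.isChain_cons_cons.mp hch).2
    obtain ⟨T', hT'⟩ := ih m t h2
    have hmkg' : iot (FreeGroup.mk ((m, t) :: L')) = gb ^ m * (aa t * FreeGroup.mk T') := by
      conv_lhs => rw [← FreeGroup.mk_toWord (x := iot (FreeGroup.mk ((m, t) :: L'))), hT']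
      have : List.replicate m ((1 : Fin 2), true) ++ ((0 : Fin 2), t) :: T'
          = blk m true t T' := rfl
      rw [this, mk_blk, if_pos rfl]
    have hchain_tail : List.Chain' RR (((0 : Fin 2), t) :: T') := by
      have hc := chain'_toWord (iot (FreeGroup.mk ((m, t) :: L')))
      rw [hT'] at hc
      exact List.IsChain.right_of_append hc
    have hsplit : iot (FreeGroup.mk ((n, s) :: (m, t) :: L'))
        = gb ^ n * (aa s * ((gb ^ n)⁻¹ * gb ^ m * (aa t * FreeGroup.mk T'))) := by
      rw [mk_cons, MonoidHom.map_mul, iot_single, hmkg']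
      group
    rcases le_or_gt n m with hnm | hnm
    · have hpow : (gb ^ n)⁻¹ * gb ^ m = gb ^ (m - n) := by
        have hm : gb ^ m = gb ^ n * gb ^ (m - n) := by
          rw [← pow_add, Nat.add_sub_cancel' hnm]
        rw [hm, inv_mul_cancel_left]
      refine ⟨List.replicate (m - n) (1, true) ++ (0, t) :: T', ?_⟩
      have hc2 : List.Chain' RR (((0 : Fin 2), s) :: blk (m - n) true t T') := by
        refine List.isChain_cons.mpr ⟨?_, chain'_blk _ _ _ hchain_tail⟩
        intro y hy
        rcases hd : m - n with _ | k
        · have hnmeq : n = m := le_antisymm hnm (Nat.sub_eq_zero_iff_le.mp hd)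
          rw [hd] at hy
          have hy' : y = ((0 : Fin 2), t) := by
            simp only [blk, List.replicate_zero, List.nil_append, List.head?_cons,
              Option.mem_def, Option.some.injEq] at hy
            exact hy.symm
          rw [hy']
          rintro ⟨-, hst⟩
          exact h1 ⟨hnmeq, hst⟩
        · rw [hd] at hy
          have hy' : y = ((1 : Fin 2), true) := by
            simp only [blk, List.replicate_succ, List.cons_append, List.head?_cons,
              Option.mem_def, Option.some.injEq] at hy
            exact hy.symm
          rw [hy']
          exact RR_zero_one s true
      have hel : iot (FreeGroup.mk ((n, s) :: (m, t) :: L'))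
          = FreeGroup.mk (blk n true s (blk (m - n) true t T')) := by
        rw [hsplit, hpow, mk_blk, mk_blk, if_pos rfl, if_pos rfl]
      rw [hel, toWord_mk_of_chain' (chain'_blk n true s hc2)]
      rfl
    · have hpow : (gb ^ n)⁻¹ * gb ^ m = (gb ^ (n - m))⁻¹ := by
        have hn : gb ^ n = gb ^ m * gb ^ (n - m) := by
          rw [← pow_add, Nat.add_sub_cancel' hnm.le]
        rw [hn, mul_inv_rev, inv_mul_cancel_right]
      refine ⟨List.replicate (n - m) (1, false) ++ (0, t) :: T', ?_⟩
      have hc2 : List.Chain' RR (((0 : Fin 2), s) :: blk (n - m) false t T') := by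
        refine List.isChain_cons.mpr ⟨?_, chain'_blk _ _ _ hchain_tail⟩
        intro y hy
        rcases hd : n - m with _ | k
        · exact absurd (Nat.sub_eq_zero_iff_le.mp hd) (not_le.mpr hnm)
        · rw [hd] at hy
          have hy' : y = ((1 : Fin 2), false) := by
            simp only [blk, List.replicate_succ, List.cons_append, List.head?_cons,
              Option.mem_def, Option.some.injEq] at hy
            exact hy.symm
          rw [hy']
          exact RR_zero_one s false
      have hel : iot (FreeGroup.mk ((n, s) :: (m, t) :: L'))
          = FreeGroup.mk (blk n true s (blk (n - m) false t T')) := by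
        rw [hsplit, hpow, mk_blk, mk_blk, if_pos rfl, if_neg (by simp)]
      rw [hel, toWord_mk_of_chain' (chain'_blk n true s hc2)]
      rfl

theorem iot_inj : Function.Injective iot := by
  rw [injective_iff_map_eq_one]
  intro w hw
  by_contra hne
  have hL : w.toWord ≠ [] := fun h => hne (FreeGroup.toWord_eq_nil_iff.mp h)
  rcases hLl : w.toWord with _ | ⟨⟨n, s⟩, L⟩
  · exact hL hLl
  · have hch : List.Chain' RR ((n, s) :: L) := by
      rw [← hLl]; exact chain'_toWord w
    obtain ⟨T, hT⟩ := key L n s hch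
    have hmk : FreeGroup.mk ((n, s) :: L) = w := by
      rw [← hLl]; exact FreeGroup.mk_toWord
    rw [hmk, hw, FreeGroup.toWord_one] at hT
    exact absurd hT.symm (by simp)

/-! ### Coset representatives and the section via path sums -/

noncomputable def Hsub : Subgroup F2 := iot.range

lemma cg_mem (n : ℕ) : cg n ∈ Hsub := ⟨FreeGroup.of n, iot_of n⟩

noncomputable def rep (h : F2) : F2 := Quotient.out (QuotientGroup.mk (s := Hsub) h)

lemma rep_rel (h : F2) : (rep h)⁻¹ * h ∈ Hsub := by
  have hq : (QuotientGroup.mk (s := Hsub) (rep h)) = QuotientGroup.mk h :=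
    QuotientGroup.out_eq' _
  exact QuotientGroup.eq.mp hq

lemma rep_mul_cg (h : F2) (n : ℕ) : rep (h * cg n) = rep h := by
  unfold rep
  rw [QuotientGroup.mk_mul_of_mem h (cg_mem n)]

noncomputable def pathSum (z : F2 → ℕ → Bool) : F2 → List (ℕ × Bool) → Bool
  | _, [] => false
  | r, (n, true) :: L => z r n + pathSum z (r * cg n) L
  | r, (n, false) :: L => z (r * (cg n)⁻¹) n + pathSum z (r * (cg n)⁻¹) L

lemma pathSum_nil (z : F2 → ℕ → Bool) (r : F2) : pathSum z r [] = false := rfl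

lemma pathSum_cons_t (z : F2 → ℕ → Bool) (r : F2) (n : ℕ) (L : List (ℕ × Bool)) :
    pathSum z r ((n, true) :: L) = z r n + pathSum z (r * cg n) L := rfl

lemma pathSum_cons_f (z : F2 → ℕ → Bool) (r : F2) (n : ℕ) (L : List (ℕ × Bool)) :
    pathSum z r ((n, false) :: L)
      = z (r * (cg n)⁻¹) n + pathSum z (r * (cg n)⁻¹) L := rfl

lemma pathSum_cancel (z : F2 → ℕ → Bool) (x : ℕ) (b : Bool) (L₂ : List (ℕ × Bool)) :
    ∀ (L₁ : List (ℕ × Bool)) (r : F2),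
      pathSum z r (L₁ ++ (x, b) :: (x, !b) :: L₂) = pathSum z r (L₁ ++ L₂) := by
  intro L₁
  induction L₁ with
  | nil =>
    intro r
    cases b
    · rw [List.nil_append, List.nil_append, Bool.not_false, pathSum_cons_f, pathSum_cons_t,
        inv_mul_cancel_right]
      exact bool_add_add _ _
    · rw [List.nil_append, List.nil_append, Bool.not_true, pathSum_cons_t, pathSum_cons_f,
        mul_inv_cancel_right]
      exact bool_add_add _ _
  | cons q L₁ ih =>
    intro r
    obtain ⟨k, bk⟩ := q
    cases bk
    · rw [List.cons_append, List.cons_append, pathSum_cons_f, pathSum_cons_f]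
      exact congrArg _ (ih _)
    · rw [List.cons_append, List.cons_append, pathSum_cons_t, pathSum_cons_t]
      exact congrArg _ (ih _)

lemma pathSum_step (z : F2 → ℕ → Bool) (r : F2) {L₁ L₂ : List (ℕ × Bool)}
    (h : FreeGroup.Red.Step L₁ L₂) : pathSum z r L₁ = pathSum z r L₂ := by
  cases h with
  | @not L₁ L₂ x b => exact pathSum_cancel z x b L₂ L₁ r

lemma pathSum_red (z : F2 → ℕ → Bool) {L₁ L₂ : List (ℕ × Bool)}
    (h : FreeGroup.Red L₁ L₂) (r : F2) : pathSum z r L₁ = pathSum z r L₂ := by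
  induction h with
  | refl => rfl
  | tail _ hstep ih => exact ih.trans (pathSum_step z r hstep)

lemma pathSum_mk_eq (z : F2 → ℕ → Bool) (r : F2) {L₁ L₂ : List (ℕ × Bool)}
    (h : FreeGroup.mk L₁ = FreeGroup.mk L₂) : pathSum z r L₁ = pathSum z r L₂ := by
  have h1 := pathSum_red z (FreeGroup.reduce.red (L := L₁)) r
  have h2 := pathSum_red z (FreeGroup.reduce.red (L := L₂)) r
  rw [h1, h2, FreeGroup.reduce.sound h]

lemma pathSum_append (z : F2 → ℕ → Bool) :
    ∀ (L₁ L₂ : List (ℕ × Bool)) (r : F2),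
      pathSum z r (L₁ ++ L₂)
        = pathSum z r L₁ + pathSum z (r * iot (FreeGroup.mk L₁)) L₂ := by
  intro L₁
  induction L₁ with
  | nil =>
    intro L₂ r
    rw [List.nil_append, pathSum_nil, ← FreeGroup.one_eq_mk, MonoidHom.map_one, mul_one,
      bool_false_add]
  | cons q L₁ ih =>
    intro L₂ r
    obtain ⟨k, bk⟩ := q
    have hco : ∀ s : Bool, iot (FreeGroup.mk ((k, s) :: L₁))
        = iot (FreeGroup.mk [(k, s)]) * iot (FreeGroup.mk L₁) := by
      intro s; rw [mk_cons, MonoidHom.map_mul]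
    cases bk
    · rw [List.cons_append, pathSum_cons_f, pathSum_cons_f, hco, mk_single_f,
        MonoidHom.map_inv, iot_of, ← mul_assoc, add_assoc]
      exact congrArg _ (ih L₂ _)
    · rw [List.cons_append, pathSum_cons_t, pathSum_cons_t, hco, mk_single_t,
        iot_of, ← mul_assoc, add_assoc]
      exact congrArg _ (ih L₂ _)

noncomputable def wrd (h : F2) : FreeGroup ℕ := Function.invFun iot ((rep h)⁻¹ * h)

lemma iot_wrd (h : F2) : iot (wrd h) = (rep h)⁻¹ * h := by
  obtain ⟨w, hw⟩ := rep_rel h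
  exact Function.invFun_eq ⟨w, hw⟩

noncomputable def sec (z : F2 → ℕ → Bool) (h : F2) : Bool :=
  pathSum z (rep h) (wrd h).toWord

lemma sec_mul_cg (z : F2 → ℕ → Bool) (h : F2) (n : ℕ) :
    sec z (h * cg n) = sec z h + z h n := by
  have hrep := rep_mul_cg h n
  have hww : wrd (h * cg n) = wrd h * FreeGroup.of n := by
    apply iot_inj
    rw [iot_wrd, MonoidHom.map_mul, iot_wrd, iot_of, hrep, mul_assoc]
  unfold sec
  rw [hrep, hww]
  have hmk : FreeGroup.mk ((wrd h * FreeGroup.of n).toWord)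
      = FreeGroup.mk ((wrd h).toWord ++ [(n, true)]) := by
    rw [FreeGroup.mk_toWord, ← FreeGroup.mul_mk, FreeGroup.mk_toWord, mk_single_t]
  rw [pathSum_mk_eq z (rep h) hmk, pathSum_append]
  congr 1
  rw [FreeGroup.mk_toWord, iot_wrd, mul_inv_cancel_left, pathSum_cons_t, pathSum_nil]
  exact bool_add_false _

/-! ### The factor map and its section -/

def pii (x : F2 → Bool) : F2 → ℕ → Bool := fun h n => x h + x (h * cg n)

lemma pii_sec (z : F2 → ℕ → Bool) : pii (sec z) = z := by
  funext h n
  show sec z h + sec z (h * cg n) = z h n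
  rw [sec_mul_cg, bool_add_add]

lemma pii_add (x x' : F2 → Bool) : pii (x + x') = pii x + pii x' := by
  funext h n
  show (x h + x' h) + (x (h * cg n) + x' (h * cg n))
      = (x h + x (h * cg n)) + (x' h + x' (h * cg n))
  exact add_add_add_comm _ _ _ _

lemma bshift_mul (K : Type*) (f₂ f₁ : F2) (x : F2 → K) :
    bshift K (f₂ * f₁) x = bshift K f₂ (bshift K f₁ x) := by
  funext h
  simp [bshift, mul_inv_rev, mul_assoc]

lemma bshift_add (f : F2) (u v : F2 → Bool) :
    bshift Bool f (u + v) = bshift Bool f u + bshift Bool f v := rfl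

lemma pii_shift (f : F2) (x : F2 → Bool) :
    pii (bshift Bool f x) = bshift (ℕ → Bool) f (pii x) := by
  funext h n
  simp [pii, bshift, mul_assoc]

lemma fadd_self (u : F2 → Bool) : u + u = 0 := by
  funext h
  exact bool_add_self _

/-! ### Continuity -/

lemma continuous_pathSum : ∀ (L : List (ℕ × Bool)) (r : F2),
    Continuous fun z : F2 → ℕ → Bool => pathSum z r L := by
  intro L
  induction L with
  | nil =>
    intro r
    simpa only [pathSum_nil] using (continuous_const : Continuous fun _ : F2 → ℕ → Bool => false)
  | cons q L ih =>
    intro r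
    obtain ⟨k, bk⟩ := q
    cases bk
    · simp only [pathSum_cons_f]
      exact (continuous_of_discreteTopology (f := fun p : Bool × Bool => p.1 + p.2)).comp
        (((continuous_apply _).comp (continuous_apply _)).prodMk (ih _))
    · simp only [pathSum_cons_t]
      exact (continuous_of_discreteTopology (f := fun p : Bool × Bool => p.1 + p.2)).comp
        (((continuous_apply _).comp (continuous_apply _)).prodMk (ih _))

lemma continuous_sec : Continuous sec :=
  continuous_pi fun h => continuous_pathSum (wrd h).toWord (rep h)

lemma continuous_pii : Continuous pii :=
  continuous_pi fun h => continuous_pi fun n =>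
    (continuous_apply h).add (continuous_apply (h * cg n))

/-! ### The kernel subgroup -/

def pihom : (F2 → Bool) →+ (F2 → ℕ → Bool) where
  toFun := pii
  map_zero' := by
    funext h n
    exact bool_add_self _
  map_add' := pii_add

def KER : AddSubgroup (F2 → Bool) := pihom.ker

lemma mem_KER {x : F2 → Bool} : x ∈ KER ↔ pii x = 0 := AddMonoidHom.mem_ker

lemma shift_mem_KER (f : F2) {x : F2 → Bool} (hx : x ∈ KER) : bshift Bool f x ∈ KER := by
  rw [mem_KER] at hx ⊢
  rw [pii_shift, hx]
  funext h n
  rfl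

def shiftK (f : F2) : ↥KER ≃+ ↥KER where
  toFun k := ⟨bshift Bool f k.1, shift_mem_KER f k.2⟩
  invFun k := ⟨bshift Bool f⁻¹ k.1, shift_mem_KER f⁻¹ k.2⟩
  left_inv k := Subtype.ext (by
    funext h
    simp [bshift, inv_inv, inv_mul_cancel_left, mul_inv_cancel_left])
  right_inv k := Subtype.ext (by
    funext h
    simp [bshift, inv_inv, inv_mul_cancel_left, mul_inv_cancel_left])
  map_add' k k' := Subtype.ext rfl

noncomputable def tkv (f : F2) (y : F2 → ℕ → Bool) : F2 → Bool :=
  bshift Bool f (sec y) + sec (bshift (ℕ → Bool) f y)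

lemma tkv_mem (f : F2) (y : F2 → ℕ → Bool) : tkv f y ∈ KER := by
  rw [mem_KER]
  unfold tkv
  rw [pii_add, pii_shift, pii_sec, pii_sec]
  funext h n
  exact bool_add_self _

noncomputable def tK (f : F2) (y : F2 → ℕ → Bool) : ↥KER := ⟨tkv f y, tkv_mem f y⟩

noncomputable def betaK (f : F2) (y : F2 → ℕ → Bool) (k : ↥KER) : ↥KER :=
  shiftK f k + tK f y

lemma phi_mem (x : F2 → Bool) : x + sec (pii x) ∈ KER := by
  rw [mem_KER, pii_add, pii_sec]
  funext h n
  exact bool_add_self _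

noncomputable def phiK (x : F2 → Bool) : ↥KER × (F2 → ℕ → Bool) :=
  (⟨x + sec (pii x), phi_mem x⟩, pii x)

noncomputable def psiK (p : ↥KER × (F2 → ℕ → Bool)) : F2 → Bool :=
  p.1.1 + sec p.2

lemma psiK_phiK (x : F2 → Bool) : psiK (phiK x) = x := by
  unfold psiK phiK
  simp only
  rw [add_assoc, fadd_self, add_zero]

lemma pii_psiK (k : ↥KER) (y : F2 → ℕ → Bool) : pii (psiK (k, y)) = y := by
  unfold psiK
  rw [pii_add, pii_sec, mem_KER.mp k.2, zero_add]

lemma phiK_psiK (p : ↥KER × (F2 → ℕ → Bool)) : phiK (psiK p) = p := by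
  obtain ⟨k, y⟩ := p
  unfold phiK
  refine Prod.ext (Subtype.ext ?_) (pii_psiK k y)
  show psiK (k, y) + sec (pii (psiK (k, y))) = k.1
  rw [pii_psiK]
  show k.1 + sec y + sec y = k.1
  rw [add_assoc, fadd_self, add_zero]

lemma fadd_add (u v : F2 → Bool) : u + (u + v) = v := by
  funext h
  exact bool_add_add _ _

lemma char2_rearrange (B C D : F2 → Bool) : B + D = (B + C) + (C + D) := by
  have h : (B + C) + (C + D) = (B + D) + (C + C) := by abel
  rw [h, fadd_self, add_zero]

lemma tkv_cocycle (f₁ f₂ : F2) (y : F2 → ℕ → Bool) :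
    tkv (f₂ * f₁) y = bshift Bool f₂ (tkv f₁ y) + tkv f₂ (bshift (ℕ → Bool) f₁ y) := by
  unfold tkv
  rw [bshift_add, bshift_mul Bool f₂ f₁ (sec y), bshift_mul (ℕ → Bool) f₂ f₁ y]
  exact char2_rearrange _ _ _

lemma betaK_cocycle (f₁ f₂ : F2) (y : F2 → ℕ → Bool) :
    betaK (f₂ * f₁) y = (betaK f₂ (bshift (ℕ → Bool) f₁ y)) ∘ (betaK f₁ y) := by
  funext k
  apply Subtype.ext
  show bshift Bool (f₂ * f₁) k.1 + tkv (f₂ * f₁) y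
      = bshift Bool f₂ (bshift Bool f₁ k.1 + tkv f₁ y) + tkv f₂ (bshift (ℕ → Bool) f₁ y)
  rw [tkv_cocycle, bshift_add, bshift_mul Bool f₂ f₁ k.1]
  abel

lemma phiK_equivariant (f : F2) (x : F2 → Bool) :
    phiK (bshift Bool f x)
      = (betaK f (phiK x).2 (phiK x).1, bshift (ℕ → Bool) f (phiK x).2) := by
  unfold phiK
  refine Prod.ext (Subtype.ext ?_) (pii_shift f x)
  show bshift Bool f x + sec (pii (bshift Bool f x))
      = bshift Bool f (x + sec (pii x)) + tkv f (pii x)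
  rw [pii_shift, bshift_add]
  unfold tkv
  rw [add_assoc]
  congr 1
  exact (fadd_add _ _).symm

end StmtAux

open StmtAux in
theorem stmt9 :
    ∃ (K₀ : Type) (_ : TopologicalSpace K₀) (_ : MeasurableSpace K₀) (_ : AddCommGroup K₀),
      BorelSpace K₀ ∧ CompactSpace K₀ ∧ TopologicalSpace.MetrizableSpace K₀ ∧
      IsTopologicalAddGroup K₀ ∧
      ∃ β₀ : F2 → (F2 → (ℕ → Bool)) → K₀ → K₀,
        -- each β₀(f, y) is a Borel affine bijection of K₀
        (∀ (f : F2) (y : F2 → (ℕ → Bool)), ∃ (σ : K₀ ≃+ K₀) (t : K₀),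
          Measurable (⇑σ) ∧ ∀ k : K₀, β₀ f y k = σ k + t) ∧
        -- the cocycle identity
        (∀ (f₁ f₂ : F2) (y : F2 → (ℕ → Bool)),
          β₀ (f₂ * f₁) y = (β₀ f₂ (bshift (ℕ → Bool) f₁ y)) ∘ (β₀ f₁ y)) ∧
        -- the equivariant Borel bijection
        ∃ φ₀ : (F2 → Bool) → K₀ × (F2 → (ℕ → Bool)),
          Measurable φ₀ ∧ Function.Bijective φ₀ ∧
          (∀ (f : F2) (x : F2 → Bool),
            φ₀ (bshift Bool f x) =
              (β₀ f (φ₀ x).2 (φ₀ x).1, bshift (ℕ → Bool) f (φ₀ x).2)) ∧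
          -- the induced projection is continuous
          Continuous fun x : F2 → Bool => (φ₀ x).2 := by
  classical
  letI : MeasurableSpace ↥KER := borel _
  haveI hBorel : BorelSpace ↥KER := ⟨rfl⟩
  -- compactness of the kernel
  have hclosed : IsClosed {x : F2 → Bool | x ∈ KER} := by
    have hset : {x : F2 → Bool | x ∈ KER} = pii ⁻¹' {0} := by
      ext x
      simp [mem_KER, Set.mem_preimage]
    rw [hset]
    exact isClosed_singleton.preimage continuous_pii
  haveI hCompact : CompactSpace ↥KER := by
    have : IsCompact {x : F2 → Bool | x ∈ KER} := hclosed.isCompact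
    exact isCompact_iff_compactSpace.mp this
  -- continuity of the subtype-valued first component
  have hcont_first : Continuous fun x : F2 → Bool =>
      (⟨x + sec (pii x), phi_mem x⟩ : ↥KER) :=
    (continuous_id.add (continuous_sec.comp continuous_pii)).subtype_mk _
  have hcont_pii : Continuous pii := continuous_pii
  have hcont_shiftK : ∀ f : F2, Continuous (shiftK f) := by
    intro f
    refine Continuous.subtype_mk ?_ _
    exact continuous_pi fun h => (continuous_apply (f⁻¹ * h)).comp continuous_subtype_val
  haveI hMetr : TopologicalSpace.MetrizableSpace ↥KER :=
    Topology.IsEmbedding.subtypeVal.metrizableSpace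
  refine ⟨↥KER, inferInstance, inferInstance, inferInstance, hBorel, hCompact,
    hMetr, inferInstance, betaK, ?_, ?_, phiK, ?_, ?_, ?_, ?_⟩
  · intro f y
    exact ⟨shiftK f, tK f y, (hcont_shiftK f).measurable, fun k => rfl⟩
  · intro f₁ f₂ y
    exact betaK_cocycle f₁ f₂ y
  · exact (hcont_first.prodMk hcont_pii).measurable
  · exact Function.bijective_iff_has_inverse.mpr ⟨psiK, psiK_phiK, phiK_psiK⟩
  · intro f x
    exact phiK_equivariant f x
  · exact hcont_pii
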